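/- Let n ≥ 2 be an integer. Let (R_1,Z_1),…,(R_n,Z_n) be i.i.d. copies of a pair (R,Z) of square-integrable real random variables satisfying Cov(R_k, Z_j) = 0 for all j,k and Cov(R_k R_{k'}, Z_j Z_{j'}) = 0 for all j,j',k,k'. Write σ_Z² = Var(Z). Define the Dr. GRPO estimator G = (1/n) Σ_{j=1}^n (R_j − (1/n) Σ_{k=1}^n R_k) Z_j. Then Var(G) = ((n−1)/n²) σ_Z² Var(R). -/

import Mathlib

open MeasureTheory ProbabilityTheory Finset

lemma sum_ite_fin₁ {n : ℕ} (j : Fin n) (x y : ℝ) :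
    ∑ k : Fin n, (if k = j then x else y) = x + ((n : ℝ) - 1) * y := by
  have h : ∀ k : Fin n, (if k = j then x else y) = y + (if k = j then x - y else 0) := by
    intro k; by_cases h : k = j <;> simp [h]
  simp only [h]
  rw [Finset.sum_add_distrib, Finset.sum_const, Finset.sum_ite_eq' Finset.univ j,
    Finset.card_univ, Fintype.card_fin]
  simp only [Finset.mem_univ, if_true, nsmul_eq_mul]
  ring

lemma sum_ite_fin₂ {n : ℕ} (j : Fin n) (x y : ℝ) :
    ∑ k : Fin n, (if j = k then x else y) = x + ((n : ℝ) - 1) * y := by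
  rw [Finset.sum_congr rfl (fun k _ => if_congr eq_comm rfl rfl)]
  exact sum_ite_fin₁ j x y

lemma variance_ae_zero {Ω : Type*} [MeasurableSpace Ω] {μ : Measure Ω} {X : Ω → ℝ}
    (h : X =ᵐ[μ] 0) : variance X μ = 0 := by
  have hm : μ[X] = 0 := by rw [integral_congr_ae h]; simp
  have hev : evariance X μ = 0 := by
    refine (evariance_eq_zero_iff (aemeasurable_const.congr h.symm)).mpr ?_
    rw [hm]
    exact h
  rw [variance, hev, ENNReal.toReal_zero]

/-- Covariance of two real random variables. -/
noncomputable def covar {Ω : Type*} [MeasurableSpace Ω] (μ : Measure Ω) (X Y : Ω → ℝ) : ℝ :=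
  (∫ ω, X ω * Y ω ∂μ) - (∫ ω, X ω ∂μ) * (∫ ω, Y ω ∂μ)

/-- **Dr. GRPO gradient variance (continuous reward).** -/
theorem drgrpo_variance_continuous
    {Ω : Type*} [MeasurableSpace Ω] (μ : Measure Ω) [IsProbabilityMeasure μ]
    (n : ℕ) (hn : 2 ≤ n)
    (R Z : Ω → ℝ) (Rv Zv : Fin n → Ω → ℝ)
    (hR2 : MemLp R 2 μ) (hZ2 : MemLp Z 2 μ)
    (hident : ∀ i, IdentDistrib (fun ω => (Rv i ω, Zv i ω)) (fun ω => (R ω, Z ω)) μ μ)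
    (hindep : iIndepFun (fun i ω => (Rv i ω, Zv i ω)) μ)
    (hcov1 : ∀ j k, covar μ (Rv k) (Zv j) = 0)
    (hcov2 : ∀ j j' k k', covar μ (fun ω => Rv k ω * Rv k' ω)
      (fun ω => Zv j ω * Zv j' ω) = 0) :
    variance (fun ω =>
        (1 / (n : ℝ)) * ∑ j, (Rv j ω - (1 / (n : ℝ)) * ∑ k, Rv k ω) * Zv j ω) μ
      = ((n : ℝ) - 1) / (n : ℝ) ^ 2 * variance Z μ * variance R μ := by
  have hN : (n : ℝ) ≠ 0 := Nat.cast_ne_zero.mpr (by omega)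
  set N : ℝ := (n : ℝ) with hNdef
  -- identically distributed components
  have hRid : ∀ i, IdentDistrib (Rv i) R μ μ := fun i => (hident i).comp measurable_fst
  have hZid : ∀ i, IdentDistrib (Zv i) Z μ μ := fun i => (hident i).comp measurable_snd
  have hRv2 : ∀ i, MemLp (Rv i) 2 μ := fun i => (hRid i).symm.memLp_snd hR2
  have hZv2 : ∀ i, MemLp (Zv i) 2 μ := fun i => (hZid i).symm.memLp_snd hZ2
  set a : ℝ := ∫ ω, R ω ∂μ with ha
  set b : ℝ := ∫ ω, Z ω ∂μ with hb
  set a2 : ℝ := ∫ ω, R ω * R ω ∂μ with ha2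
  set b2 : ℝ := ∫ ω, Z ω * Z ω ∂μ with hb2
  have hRa : ∀ i, ∫ ω, Rv i ω ∂μ = a := fun i => (hRid i).integral_eq
  have hZb : ∀ i, ∫ ω, Zv i ω ∂μ = b := fun i => (hZid i).integral_eq
  have hRR : ∀ k, ∫ ω, Rv k ω * Rv k ω ∂μ = a2 := fun k =>
    ((hident k).comp (measurable_fst.mul measurable_fst)).integral_eq
  have hZZ : ∀ j, ∫ ω, Zv j ω * Zv j ω ∂μ = b2 := fun j =>
    ((hident j).comp (measurable_snd.mul measurable_snd)).integral_eq
  have hRRc : ∀ k k', k ≠ k' → ∫ ω, Rv k ω * Rv k' ω ∂μ = a * a := by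
    intro k k' hkk'
    have h2 : (∫ ω, Rv k ω * Rv k' ω ∂μ) = (∫ ω, Rv k ω ∂μ) * ∫ ω, Rv k' ω ∂μ :=
      ((hindep.indepFun hkk').comp measurable_fst measurable_fst).integral_mul_eq_mul_integral
        (hRv2 k).aestronglyMeasurable (hRv2 k').aestronglyMeasurable
    rw [h2, hRa, hRa]
  have hZZc : ∀ j j', j ≠ j' → ∫ ω, Zv j ω * Zv j' ω ∂μ = b * b := by
    intro j j' hjj'
    have h2 : (∫ ω, Zv j ω * Zv j' ω ∂μ) = (∫ ω, Zv j ω ∂μ) * ∫ ω, Zv j' ω ∂μ :=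
      ((hindep.indepFun hjj').comp measurable_snd measurable_snd).integral_mul_eq_mul_integral
        (hZv2 j).aestronglyMeasurable (hZv2 j').aestronglyMeasurable
    rw [h2, hZb, hZb]
  set q : Fin n → Fin n → ℝ := fun k k' => if k = k' then a2 else a * a with hq
  set p : Fin n → Fin n → ℝ := fun j j' => if j = j' then b2 else b * b with hp
  have hqval : ∀ k k', ∫ ω, Rv k ω * Rv k' ω ∂μ = q k k' := by
    intro k k'
    by_cases h : k = k'
    · subst h; simp only [hq, if_pos rfl]; exact hRR k
    · simp only [hq, if_neg h]; exact hRRc k k' h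
  have hpval : ∀ j j', ∫ ω, Zv j ω * Zv j' ω ∂μ = p j j' := by
    intro j j'
    by_cases h : j = j'
    · subst h; simp only [hp, if_pos rfl]; exact hZZ j
    · simp only [hp, if_neg h]; exact hZZc j j' h
  have hquadval : ∀ j j' k k',
      ∫ ω, Rv k ω * Rv k' ω * (Zv j ω * Zv j' ω) ∂μ = q k k' * p j j' := by
    intro j j' k k'
    have h := hcov2 j j' k k'
    simp only [covar] at h
    rw [sub_eq_zero] at h
    rw [h, hqval, hpval]
  have hRZval : ∀ k j, ∫ ω, Rv k ω * Zv j ω ∂μ = a * b := by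
    intro k j
    have h := hcov1 j k
    simp only [covar] at h
    rw [sub_eq_zero] at h
    rw [h, hRa, hZb]
  set G : Ω → ℝ := fun ω => (1 / N) * ∑ j, (Rv j ω - (1 / N) * ∑ k, Rv k ω) * Zv j ω with hG
  by_cases hI : Integrable (fun ω => R ω * R ω * (Z ω * Z ω)) μ
  · -- main case
    have hRvRv : ∀ k, Integrable (fun ω => Rv k ω * Rv k ω) μ := fun k => by
      simpa [pow_two] using (hRv2 k).integrable_sq
    have hZvZv : ∀ j, Integrable (fun ω => Zv j ω * Zv j ω) μ := fun j => by
      simpa [pow_two] using (hZv2 j).integrable_sq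
    have hsqint : ∀ k j, Integrable (fun ω => Rv k ω * Rv k ω * (Zv j ω * Zv j ω)) μ := by
      intro k j
      by_cases h : k = j
      · subst h
        exact ((hident k).comp ((measurable_fst.mul measurable_fst).mul
          (measurable_snd.mul measurable_snd))).integrable_iff.mpr hI
      · have hind := (hindep.indepFun h).comp (measurable_fst.mul measurable_fst)
          (measurable_snd.mul measurable_snd)
        have := hind.integrable_mul (hRvRv k) (hZvZv j)
        exact this
    have hquadint : ∀ j j' k k',
        Integrable (fun ω => Rv k ω * Rv k' ω * (Zv j ω * Zv j' ω)) μ := by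
      intro j j' k k'
      have hg : Integrable (fun ω => (Rv k ω * Rv k ω * (Zv j ω * Zv j ω)
          + Rv k' ω * Rv k' ω * (Zv j' ω * Zv j' ω)) / 2) μ :=
        ((hsqint k j).add (hsqint k' j')).div_const 2
      refine hg.mono' ?_ ?_
      · exact (((hRv2 k).aestronglyMeasurable.aemeasurable.mul
          (hRv2 k').aestronglyMeasurable.aemeasurable).mul
          ((hZv2 j).aestronglyMeasurable.aemeasurable.mul
          (hZv2 j').aestronglyMeasurable.aemeasurable)).aestronglyMeasurable
      · filter_upwards with ω
        have e : Rv k ω * Rv k' ω * (Zv j ω * Zv j' ω)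
            = (Rv k ω * Zv j ω) * (Rv k' ω * Zv j' ω) := by ring
        rw [Real.norm_eq_abs, e, abs_mul]
        have h1 : Rv k ω * Rv k ω * (Zv j ω * Zv j ω) = |Rv k ω * Zv j ω| ^ 2 := by
          rw [sq_abs]; ring
        have h2 : Rv k' ω * Rv k' ω * (Zv j' ω * Zv j' ω) = |Rv k' ω * Zv j' ω| ^ 2 := by
          rw [sq_abs]; ring
        rw [h1, h2]
        nlinarith [sq_nonneg (|Rv k ω * Zv j ω| - |Rv k' ω * Zv j' ω|),
          abs_nonneg (Rv k ω * Zv j ω), abs_nonneg (Rv k' ω * Zv j' ω)]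
    have hL2prod : ∀ k j, MemLp (fun ω => Rv k ω * Zv j ω) 2 μ := by
      intro k j
      refine (memLp_two_iff_integrable_sq ?_).mpr ?_
      · exact ((hRv2 k).aestronglyMeasurable.aemeasurable.mul
          (hZv2 j).aestronglyMeasurable.aemeasurable).aestronglyMeasurable
      · have e : (fun x => (Rv k x * Zv j x) ^ 2)
            = fun ω => Rv k ω * Rv k ω * (Zv j ω * Zv j ω) := by funext ω; ring
        rw [e]; exact hsqint k j
    have hint1 : ∀ k j, Integrable (fun ω => Rv k ω * Zv j ω) μ :=
      fun k j => (hL2prod k j).integrable (by norm_num)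
    have hterm : ∀ j : Fin n, (fun ω => (Rv j ω - (1 / N) * ∑ k, Rv k ω) * Zv j ω)
        = fun ω => Rv j ω * Zv j ω - (1 / N) * ∑ k, Rv k ω * Zv j ω := by
      intro j; funext ω
      rw [sub_mul, mul_assoc, Finset.sum_mul]
    have hterm_int : ∀ j : Fin n,
        Integrable (fun ω => (Rv j ω - (1 / N) * ∑ k, Rv k ω) * Zv j ω) μ := by
      intro j; rw [hterm j]
      exact (hint1 j j).sub ((integrable_finset_sum _ fun k _ => hint1 k j).const_mul _)
    have hsum2 : MemLp (fun ω => ∑ j, (Rv j ω - (1 / N) * ∑ k, Rv k ω) * Zv j ω) 2 μ :=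
      memLp_finset_sum (f := fun j ω => (Rv j ω - (1 / N) * ∑ k, Rv k ω) * Zv j ω) _ (fun j _ => by
        rw [hterm j]
        exact ((hL2prod j j).sub
          (MemLp.const_mul (memLp_finset_sum (f := fun k ω => Rv k ω * Zv j ω) _ fun k _ => hL2prod k j) _)))
    have hG2 : MemLp G 2 μ := by
      rw [hG]
      exact hsum2.const_mul _
    have hEG : μ[G] = 0 := by
      rw [hG, integral_const_mul, integral_finset_sum _ fun j _ => hterm_int j]
      have hj : ∀ j : Fin n, ∫ ω, (Rv j ω - (1 / N) * ∑ k, Rv k ω) * Zv j ω ∂μ = 0 := by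
        intro j
        rw [hterm j, integral_sub (hint1 j j)
          ((integrable_finset_sum _ fun k _ => hint1 k j).const_mul _),
          integral_const_mul, integral_finset_sum _ fun k _ => hint1 k j]
        simp only [hRZval]
        rw [Finset.sum_const, Finset.card_univ, Fintype.card_fin, nsmul_eq_mul]
        field_simp
        rw [hNdef]; ring
      simp only [hj, Finset.sum_const_zero, mul_zero]
    set t : ℝ := a2 + (N - 1) * (a * a) with ht
    have hFexp : ∀ j j' : Fin n,
        (fun ω => ((Rv j ω - (1 / N) * ∑ k, Rv k ω) * Zv j ω)
          * ((Rv j' ω - (1 / N) * ∑ k, Rv k ω) * Zv j' ω))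
        = fun ω => Rv j ω * Rv j' ω * (Zv j ω * Zv j' ω)
            - (1 / N) * ∑ k, Rv k ω * Rv j' ω * (Zv j ω * Zv j' ω)
            - (1 / N) * ∑ k, Rv j ω * Rv k ω * (Zv j ω * Zv j' ω)
            + (1 / N) * (1 / N) * ∑ k, ∑ k', Rv k ω * Rv k' ω * (Zv j ω * Zv j' ω) := by
      intro j j'; funext ω
      have h1 : ∑ k, Rv k ω * Rv j' ω * (Zv j ω * Zv j' ω)
          = (∑ k, Rv k ω) * (Rv j' ω * (Zv j ω * Zv j' ω)) := by
        rw [Finset.sum_mul]; exact Finset.sum_congr rfl fun k _ => by ring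
      have h2 : ∑ k, Rv j ω * Rv k ω * (Zv j ω * Zv j' ω)
          = (∑ k, Rv k ω) * (Rv j ω * (Zv j ω * Zv j' ω)) := by
        rw [Finset.sum_mul]; exact Finset.sum_congr rfl fun k _ => by ring
      have hd : ∑ k, ∑ k', Rv k ω * Rv k' ω * (Zv j ω * Zv j' ω)
          = (∑ k, Rv k ω) * (∑ k, Rv k ω) * (Zv j ω * Zv j' ω) := by
        rw [Finset.sum_mul_sum, Finset.sum_mul]
        exact Finset.sum_congr rfl fun k _ => by rw [Finset.sum_mul]
      rw [h1, h2, hd]; ring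
    have hFint : ∀ j j' : Fin n,
        Integrable (fun ω => ((Rv j ω - (1 / N) * ∑ k, Rv k ω) * Zv j ω)
          * ((Rv j' ω - (1 / N) * ∑ k, Rv k ω) * Zv j' ω)) μ := by
      intro j j'
      rw [hFexp j j']
      exact (((hquadint j j' j j').sub
          ((integrable_finset_sum _ fun k _ => hquadint j j' k j').const_mul _)).sub
          ((integrable_finset_sum _ fun k _ => hquadint j j' j k).const_mul _)).add
          ((integrable_finset_sum _ fun k _ =>
            integrable_finset_sum _ fun k' _ => hquadint j j' k k').const_mul _)
    have hFval : ∀ j j' : Fin n,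
        ∫ ω, ((Rv j ω - (1 / N) * ∑ k, Rv k ω) * Zv j ω)
          * ((Rv j' ω - (1 / N) * ∑ k, Rv k ω) * Zv j' ω) ∂μ
        = (q j j' - (1 / N) * t) * p j j' := by
      intro j j'
      have i1 : Integrable (fun ω => Rv j ω * Rv j' ω * (Zv j ω * Zv j' ω)) μ :=
        hquadint j j' j j'
      have i2 : Integrable
          (fun ω => (1 / N) * ∑ k, Rv k ω * Rv j' ω * (Zv j ω * Zv j' ω)) μ :=
        (integrable_finset_sum _ fun k _ => hquadint j j' k j').const_mul _
      have i3 : Integrable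
          (fun ω => (1 / N) * ∑ k, Rv j ω * Rv k ω * (Zv j ω * Zv j' ω)) μ :=
        (integrable_finset_sum _ fun k _ => hquadint j j' j k).const_mul _
      have i4 : Integrable (fun ω =>
          (1 / N) * (1 / N) * ∑ k, ∑ k', Rv k ω * Rv k' ω * (Zv j ω * Zv j' ω)) μ :=
        (integrable_finset_sum _ fun k _ =>
          integrable_finset_sum _ fun k' _ => hquadint j j' k k').const_mul _
      have i12 : Integrable (fun ω => Rv j ω * Rv j' ω * (Zv j ω * Zv j' ω)
          - (1 / N) * ∑ k, Rv k ω * Rv j' ω * (Zv j ω * Zv j' ω)) μ := i1.sub i2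
      have i123 : Integrable (fun ω => Rv j ω * Rv j' ω * (Zv j ω * Zv j' ω)
          - (1 / N) * ∑ k, Rv k ω * Rv j' ω * (Zv j ω * Zv j' ω)
          - (1 / N) * ∑ k, Rv j ω * Rv k ω * (Zv j ω * Zv j' ω)) μ := i12.sub i3
      rw [hFexp j j', integral_add i123 i4, integral_sub i12 i3, integral_sub i1 i2,
        integral_const_mul, integral_const_mul, integral_const_mul,
        integral_finset_sum _ fun k _ => hquadint j j' k j',
        integral_finset_sum _ fun k _ => hquadint j j' j k,
        integral_finset_sum _ fun k _ =>
          integrable_finset_sum _ fun k' _ => hquadint j j' k k']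
      have hrow : ∀ k : Fin n, ∫ ω, ∑ k', Rv k ω * Rv k' ω * (Zv j ω * Zv j' ω) ∂μ
          = t * p j j' := by
        intro k
        rw [integral_finset_sum _ fun k' _ => hquadint j j' k k']
        simp only [hquadval]
        rw [← Finset.sum_mul]
        congr 1
        simp only [hq]
        rw [sum_ite_fin₂ k a2 (a * a)]
      simp only [hquadval, hrow]
      have s1 : ∑ k, q k j' * p j j' = t * p j j' := by
        rw [← Finset.sum_mul]
        congr 1
        simp only [hq]
        rw [sum_ite_fin₁ j' a2 (a * a)]
      have s2 : ∑ k, q j k * p j j' = t * p j j' := by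
        rw [← Finset.sum_mul]
        congr 1
        simp only [hq]
        rw [sum_ite_fin₂ j a2 (a * a)]
      rw [s1, s2, Finset.sum_const, Finset.card_univ, Fintype.card_fin, nsmul_eq_mul]
      field_simp
      ring
    have hsq : (G ^ 2 : Ω → ℝ) = fun ω => (1 / N) * (1 / N)
        * ∑ j, ∑ j', ((Rv j ω - (1 / N) * ∑ k, Rv k ω) * Zv j ω)
          * ((Rv j' ω - (1 / N) * ∑ k, Rv k ω) * Zv j' ω) := by
      funext ω
      simp only [Pi.pow_apply, hG]
      rw [← Finset.sum_mul_sum]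
      ring
    have hEG2 : μ[G ^ 2] = (1 / N) * (1 / N)
        * (N * ((a2 - (1 / N) * t) * b2 + (N - 1) * ((a * a - (1 / N) * t) * (b * b)))) := by
      rw [hsq, integral_const_mul,
        integral_finset_sum _ fun j _ => integrable_finset_sum _ fun j' _ => hFint j j']
      congr 1
      have hrow : ∀ j : Fin n,
          ∫ ω, ∑ j', ((Rv j ω - (1 / N) * ∑ k, Rv k ω) * Zv j ω)
            * ((Rv j' ω - (1 / N) * ∑ k, Rv k ω) * Zv j' ω) ∂μ
          = (a2 - (1 / N) * t) * b2 + (N - 1) * ((a * a - (1 / N) * t) * (b * b)) := by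
        intro j
        rw [integral_finset_sum _ fun j' _ => hFint j j']
        have he : ∀ j' : Fin n, ∫ ω, ((Rv j ω - (1 / N) * ∑ k, Rv k ω) * Zv j ω)
            * ((Rv j' ω - (1 / N) * ∑ k, Rv k ω) * Zv j' ω) ∂μ
            = if j = j' then (a2 - (1 / N) * t) * b2
              else (a * a - (1 / N) * t) * (b * b) := by
          intro j'
          rw [hFval j j']
          by_cases h : j = j'
          · subst h; simp [hq, hp]
          · simp [hq, hp, h]
        simp only [he]
        rw [sum_ite_fin₂ j ((a2 - (1 / N) * t) * b2) ((a * a - (1 / N) * t) * (b * b))]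
      simp only [hrow]
      rw [Finset.sum_const, Finset.card_univ, Fintype.card_fin, nsmul_eq_mul]
    rw [variance_eq_sub hG2, hEG2, hEG, variance_eq_sub hR2, variance_eq_sub hZ2]
    have eZ : μ[Z ^ 2] = b2 := by
      rw [hb2]; congr 1; funext ω; simp [pow_two]
    have eR : μ[R ^ 2] = a2 := by
      rw [ha2]; congr 1; funext ω; simp [pow_two]
    rw [eZ, eR]
    rw [show μ[Z] = b from rfl, show μ[R] = a from rfl, ht]
    field_simp
    ring
  · -- degenerate case
    have i0 : Fin n := ⟨0, by omega⟩
    have hzero : a2 * b2 = 0 := by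
      have h := hcov2 i0 i0 i0 i0
      simp only [covar] at h
      rw [sub_eq_zero] at h
      have hni : ¬ Integrable (fun ω => Rv i0 ω * Rv i0 ω * (Zv i0 ω * Zv i0 ω)) μ := by
        intro hint
        exact hI (((hident i0).comp ((measurable_fst.mul measurable_fst).mul
          (measurable_snd.mul measurable_snd))).integrable_iff.mp hint)
      rw [integral_undef hni] at h
      rw [hRR i0, hZZ i0] at h
      exact h.symm
    have hGzero_of_R : a2 = 0 → G =ᵐ[μ] 0 ∧ R =ᵐ[μ] 0 := by
      intro ha20
      have hR0 : R =ᵐ[μ] 0 := by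
        have hint : Integrable (fun ω => R ω * R ω) μ := by
          simpa [pow_two] using hR2.integrable_sq
        have h0 := (integral_eq_zero_iff_of_nonneg
          (fun ω => mul_self_nonneg (R ω)) hint).mp (by rw [← ha2]; exact ha20)
        filter_upwards [h0] with ω hω
        exact mul_self_eq_zero.mp hω
      have hRv0 : ∀ i, Rv i =ᵐ[μ] 0 := by
        intro i
        have hint : Integrable (fun ω => Rv i ω * Rv i ω) μ := by
          simpa [pow_two] using (hRv2 i).integrable_sq
        have h0 := (integral_eq_zero_iff_of_nonneg
          (fun ω => mul_self_nonneg (Rv i ω)) hint).mp (by rw [hRR i]; exact ha20)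
        filter_upwards [h0] with ω hω
        exact mul_self_eq_zero.mp hω
      refine ⟨?_, hR0⟩
      have hall : ∀ᵐ ω ∂μ, ∀ i, Rv i ω = 0 := ae_all_iff.mpr hRv0
      rw [hG]
      filter_upwards [hall] with ω hω
      simp [hω]
    have hGzero_of_Z : b2 = 0 → G =ᵐ[μ] 0 ∧ Z =ᵐ[μ] 0 := by
      intro hb20
      have hZ0 : Z =ᵐ[μ] 0 := by
        have hint : Integrable (fun ω => Z ω * Z ω) μ := by
          simpa [pow_two] using hZ2.integrable_sq
        have h0 := (integral_eq_zero_iff_of_nonneg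
          (fun ω => mul_self_nonneg (Z ω)) hint).mp (by rw [← hb2]; exact hb20)
        filter_upwards [h0] with ω hω
        exact mul_self_eq_zero.mp hω
      have hZv0 : ∀ i, Zv i =ᵐ[μ] 0 := by
        intro i
        have hint : Integrable (fun ω => Zv i ω * Zv i ω) μ := by
          simpa [pow_two] using (hZv2 i).integrable_sq
        have h0 := (integral_eq_zero_iff_of_nonneg
          (fun ω => mul_self_nonneg (Zv i ω)) hint).mp (by rw [hZZ i]; exact hb20)
        filter_upwards [h0] with ω hω
        exact mul_self_eq_zero.mp hω
      refine ⟨?_, hZ0⟩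
      have hall : ∀ᵐ ω ∂μ, ∀ i, Zv i ω = 0 := ae_all_iff.mpr hZv0
      rw [hG]
      filter_upwards [hall] with ω hω
      simp [hω]
    rcases mul_eq_zero.mp hzero with h0 | h0
    · obtain ⟨hG0, hR0⟩ := hGzero_of_R h0
      rw [variance_ae_zero hG0, variance_ae_zero hR0, mul_zero]
    · obtain ⟨hG0, hZ0⟩ := hGzero_of_Z h0
      rw [variance_ae_zero hG0, variance_ae_zero hZ0, mul_zero, zero_mul]
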